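/- Let n ≥ 2 and let f be an (n-1)-times differentiable function on [a,b] such that f⁽ⁱ⁾ ≥ 0 for i = 0,…,n-2, f⁽ⁿ⁻¹⁾ is strictly positive on [a,b], and f/f⁽ⁿ⁻¹⁾ is bounded on [a,b]. Set A := sup{|f(x)/f⁽ⁿ⁻¹⁾(x)| : x ∈ [a,b]}. Then (b-a)·f(a)ⁿ + ((n-1)/(n!·A))·(∫_a^b f)ⁿ ≤ ∫_a^b fⁿ. -/

import Mathlib

open Set intervalIntegral MeasureTheory

lemma aux_nonneg {a b : ℝ} (hab : a < b) (φ : ℝ → ℝ)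
    (hc : ContinuousOn φ (Set.Icc a b))
    (hd : ∀ x ∈ Set.Ioo a b, ∃ d, 0 ≤ d ∧ HasDerivAt φ d x)
    (h0 : 0 ≤ φ a) : ∀ x ∈ Set.Icc a b, 0 ≤ φ x := by
  intro x hx
  have hmono : MonotoneOn φ (Set.Icc a b) := by
    apply monotoneOn_of_deriv_nonneg (convex_Icc a b) hc
    · intro y hy
      rw [interior_Icc] at hy
      obtain ⟨d, _, hd'⟩ := hd y hy
      exact hd'.differentiableAt.differentiableWithinAt
    · intro y hy
      rw [interior_Icc] at hy
      obtain ⟨d, hd0, hd'⟩ := hd y hy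
      rw [hd'.deriv]; exact hd0
  exact h0.trans (hmono (Set.left_mem_Icc.2 hab.le) hx hx.1)

theorem stmt14 (a b : ℝ) (hab : a < b) (n : ℕ) (hn : 2 ≤ n)
    (f : ℝ → ℝ)
    (hf_diff : ∀ i < n - 1,
      DifferentiableOn ℝ (iteratedDerivWithin i f (Set.Icc a b)) (Set.Icc a b))
    (hf_nonneg : ∀ i ≤ n - 2, ∀ x ∈ Set.Icc a b,
      0 ≤ iteratedDerivWithin i f (Set.Icc a b) x)
    (hf_pos' : ∀ x ∈ Set.Icc a b, 0 < iteratedDerivWithin (n - 1) f (Set.Icc a b) x)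
    (hbdd : ∃ C : ℝ, ∀ x ∈ Set.Icc a b,
      |f x / iteratedDerivWithin (n - 1) f (Set.Icc a b) x| ≤ C) :
    (b - a) * f a ^ n +
      (((n : ℝ) - 1) /
          ((n.factorial : ℝ) *
            sSup ((fun x => |f x / iteratedDerivWithin (n - 1) f (Set.Icc a b) x|) ''
              Set.Icc a b))) *
        (∫ x in a..b, f x) ^ n ≤
    ∫ x in a..b, f x ^ n := by
  obtain ⟨m, rfl⟩ : ∃ m, n = m + 2 := ⟨n - 2, by omega⟩
  clear hn
  simp only [show m + 2 - 1 = m + 1 from by omega, show m + 2 - 2 = m from by omega]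
    at hf_diff hf_nonneg hf_pos' hbdd ⊢
  have ha : a ∈ Set.Icc a b := Set.left_mem_Icc.2 hab.le
  have hb : b ∈ Set.Icc a b := Set.right_mem_Icc.2 hab.le
  set A := sSup ((fun x => |f x / iteratedDerivWithin (m + 1) f (Set.Icc a b) x|) '' Set.Icc a b)
    with hAdef
  have hAub : ∀ x ∈ Set.Icc a b,
      |f x / iteratedDerivWithin (m + 1) f (Set.Icc a b) x| ≤ A := by
    intro x hx
    obtain ⟨C, hC⟩ := hbdd
    exact le_csSup ⟨C, by rintro _ ⟨y, hy, rfl⟩; exact hC y hy⟩ ⟨x, hx, rfl⟩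
  have hA0 : 0 ≤ A := (abs_nonneg _).trans (hAub a ha)
  have hAf : ∀ x ∈ Set.Icc a b,
      f x ≤ A * iteratedDerivWithin (m + 1) f (Set.Icc a b) x := by
    intro x hx
    have h1 := (le_abs_self _).trans (hAub x hx)
    rwa [div_le_iff₀ (hf_pos' x hx)] at h1
  have hfnn : ∀ x ∈ Set.Icc a b, 0 ≤ f x := by
    intro x hx
    have := hf_nonneg 0 (by omega) x hx
    rwa [iteratedDerivWithin_zero] at this
  rcases eq_or_lt_of_le hA0 with hA0' | hApos
  · -- A = 0 : f vanishes on Icc a b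
    have hf0 : Set.EqOn f (fun _ => (0:ℝ)) (Set.Icc a b) := by
      intro x hx
      have h1 := hAf x hx
      rw [← hA0', zero_mul] at h1
      exact le_antisymm h1 (hfnn x hx)
    have huIcc : Set.uIcc a b = Set.Icc a b := Set.uIcc_of_le hab.le
    have h1 : (∫ x in a..b, f x) = 0 := by
      rw [intervalIntegral.integral_congr (g := fun _ => (0:ℝ)) (by rwa [huIcc])]
      simp
    have h2 : (∫ x in a..b, f x ^ (m + 2)) = 0 := by
      rw [intervalIntegral.integral_congr (g := fun _ => (0:ℝ))
        (fun x hx => by rw [hf0 (huIcc ▸ hx)]; simp)]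
      simp
    rw [h1, h2, hf0 ha]
    simp
  · -- main case
    have huniq : UniqueDiffOn ℝ (Set.Icc a b) := uniqueDiffOn_Icc hab
    have hDcont : ∀ k ≤ m, ContinuousOn (iteratedDerivWithin k f (Set.Icc a b)) (Set.Icc a b) :=
      fun k hk => (hf_diff k (by omega)).continuousOn
    have hfc : ContinuousOn f (Set.Icc a b) := by
      have := hDcont 0 (by omega); rwa [iteratedDerivWithin_zero] at this
    have hDderiv : ∀ k ≤ m, ∀ x ∈ Set.Ioo a b,
        HasDerivAt (iteratedDerivWithin k f (Set.Icc a b))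
          (iteratedDerivWithin (k + 1) f (Set.Icc a b) x) x := by
      intro k hk x hx
      have hxI : x ∈ Set.Icc a b := Set.Ioo_subset_Icc_self hx
      have h1 := (hf_diff k (by omega) x hxI).hasDerivWithinAt
      rw [← iteratedDerivWithin_succ] at h1
      exact h1.hasDerivAt (Icc_mem_nhds hx.1 hx.2)
    have hfderiv : ∀ x ∈ Set.Ioo a b,
        HasDerivAt f (iteratedDerivWithin 1 f (Set.Icc a b) x) x := by
      intro x hx
      have := hDderiv 0 (by omega) x hx
      rwa [iteratedDerivWithin_zero] at this
    have hDnn : ∀ k ≤ m + 1, ∀ x ∈ Set.Icc a b,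
        0 ≤ iteratedDerivWithin k f (Set.Icc a b) x := by
      intro k hk x hx
      rcases Nat.lt_or_ge k (m + 1) with h | h
      · exact hf_nonneg k (by omega) x hx
      · have hk' : k = m + 1 := by omega
        subst hk'; exact (hf_pos' x hx).le
    have hfnn : ∀ x ∈ Set.Icc a b, 0 ≤ f x := by
      intro x hx; have := hDnn 0 (by omega) x hx; rwa [iteratedDerivWithin_zero] at this
    -- primitive of f
    have hfint : ∀ x ∈ Set.Icc a b, IntervalIntegrable f volume a x := by
      intro x hx
      apply ContinuousOn.intervalIntegrable
      apply hfc.mono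
      rw [Set.uIcc_of_le hx.1]
      exact Set.Icc_subset_Icc le_rfl hx.2
    have hGcont : ContinuousOn (fun y => ∫ t in a..y, f t) (Set.Icc a b) := by
      have h := intervalIntegral.continuousOn_primitive_interval (a := a) (b := b) (μ := volume)
        (f := f) (by rw [Set.uIcc_of_le hab.le]; exact hfc.integrableOn_Icc)
      rwa [Set.uIcc_of_le hab.le] at h
    have hGderiv : ∀ x ∈ Set.Ioo a b, HasDerivAt (fun y => ∫ t in a..y, f t) (f x) x := by
      intro x hx
      have hxI : x ∈ Set.Icc a b := Set.Ioo_subset_Icc_self hx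
      exact intervalIntegral.integral_hasDerivAt_right (hfint x hxI)
        (ContinuousOn.stronglyMeasurableAtFilter isOpen_Ioo (hfc.mono Set.Ioo_subset_Icc_self) x hx)
        ((hfc x hxI).continuousAt (Icc_mem_nhds hx.1 hx.2))
    have hGnn : ∀ x ∈ Set.Icc a b, 0 ≤ ∫ t in a..x, f t := by
      intro x hx
      exact intervalIntegral.integral_nonneg hx.1
        (fun t ht => hfnn t ⟨ht.1, ht.2.trans hx.2⟩)
    have hGa : (∫ t in a..a, f t) = 0 := intervalIntegral.integral_same
    have key : ∀ j, j ≤ m → ∀ x ∈ Set.Icc a b,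
        (∫ t in a..x, f t) ^ (j + 1) ≤
          ((j + 1).factorial : ℝ) * A * f x ^ j *
            iteratedDerivWithin (m - j) f (Set.Icc a b) x := by
      intro j
      induction j with
      | zero =>
        intro _ x hx
        have h := aux_nonneg hab
          (fun y => A * iteratedDerivWithin m f (Set.Icc a b) y - ∫ t in a..y, f t)
          ((continuousOn_const.mul (hDcont m le_rfl)).sub hGcont)
          (fun y hy => ⟨A * iteratedDerivWithin (m + 1) f (Set.Icc a b) y - f y,
            sub_nonneg.2 (hAf y (Set.Ioo_subset_Icc_self hy)),
            ((hDderiv m le_rfl y hy).const_mul A).sub (hGderiv y hy)⟩)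
          (by simp only [hGa, sub_zero]; exact mul_nonneg hA0 (hDnn m (by omega) a ha))
          x hx
        have h2 := h
        simp only [Nat.sub_zero, zero_add, pow_one, pow_zero, Nat.factorial_one, Nat.cast_one,
          one_mul, mul_one] at *
        linarith [h2]
      | succ i ih =>
        intro hj x hx
        have h := aux_nonneg hab
          (fun y => ((i + 1 + 1).factorial : ℝ) * A * (f y ^ (i + 1) *
              iteratedDerivWithin (m - (i + 1)) f (Set.Icc a b) y) -
            (∫ t in a..y, f t) ^ (i + 1 + 1))
          ?cont ?der ?ini x hx
        · simp only [sub_nonneg] at h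
          calc (∫ t in a..x, f t) ^ (i + 1 + 1) ≤ _ := h
            _ = ((i + 1 + 1).factorial : ℝ) * A * f x ^ (i + 1) *
                iteratedDerivWithin (m - (i + 1)) f (Set.Icc a b) x := by ring
        case cont =>
          exact (continuousOn_const.mul ((hfc.pow (i + 1)).mul
            (hDcont (m - (i + 1)) (by omega)))).sub (hGcont.pow (i + 1 + 1))
        case ini =>
          simp only [hGa, zero_pow (Nat.succ_ne_zero (i + 1)), sub_zero]
          have := hDnn (m - (i + 1)) (by omega) a ha
          have := pow_nonneg (hfnn a ha) (i + 1)
          positivity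
        case der =>
          intro y hy
          have hyI : y ∈ Set.Icc a b := Set.Ioo_subset_Icc_self hy
          have h1 : HasDerivAt (fun z => f z ^ (i + 1))
              ((i + 1 : ℕ) * f y ^ (i + 1 - 1) * iteratedDerivWithin 1 f (Set.Icc a b) y) y :=
            (hfderiv y hy).pow (i + 1)
          rw [Nat.add_sub_cancel] at h1
          have h2 := hDderiv (m - (i + 1)) (by omega) y hy
          rw [show m - (i + 1) + 1 = m - i from by omega] at h2
          have h3 := h1.mul h2
          have h4 := h3.const_mul (((i + 1 + 1).factorial : ℝ) * A)
          have h5 : HasDerivAt (fun z => (∫ t in a..z, f t) ^ (i + 1 + 1))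
              ((i + 1 + 1 : ℕ) * (∫ t in a..y, f t) ^ (i + 1 + 1 - 1) * f y) y :=
            (hGderiv y hy).pow (i + 1 + 1)
          rw [Nat.add_sub_cancel] at h5
          refine ⟨_, ?_, h4.sub h5⟩
          -- nonnegativity of the derivative
          have hIH := ih (by omega) y hyI
          have hFnn := hfnn y hyI
          have hD1 := hDnn 1 (by omega) y hyI
          have hDa := hDnn (m - (i + 1)) (by omega) y hyI
          have hDb := hDnn (m - i) (by omega) y hyI
          have hfact : ((i + 1 + 1).factorial : ℝ) = (i + 1 + 1) * ((i + 1).factorial : ℝ) := by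
            rw [Nat.factorial_succ]; push_cast; ring
          have step : ((i + 1 + 1 : ℕ) : ℝ) * ((∫ t in a..y, f t) ^ (i + 1) * f y) ≤
              ((i + 1 + 1 : ℕ) : ℝ) * (((i + 1).factorial : ℝ) * A * f y ^ i *
                iteratedDerivWithin (m - i) f (Set.Icc a b) y * f y) := by
            exact mul_le_mul_of_nonneg_left (mul_le_mul_of_nonneg_right hIH hFnn)
              (by positivity)
          have t1 : 0 ≤ ((i + 1 + 1).factorial : ℝ) * A *
              (((i + 1 : ℕ) : ℝ) * f y ^ i * iteratedDerivWithin 1 f (Set.Icc a b) y *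
                iteratedDerivWithin (m - (i + 1)) f (Set.Icc a b) y) := by
            have := pow_nonneg hFnn i
            positivity
          rw [sub_nonneg]
          calc ((i + 1 + 1 : ℕ) : ℝ) * (∫ t in a..y, f t) ^ (i + 1) * f y
              = ((i + 1 + 1 : ℕ) : ℝ) * ((∫ t in a..y, f t) ^ (i + 1) * f y) := by ring
            _ ≤ ((i + 1 + 1 : ℕ) : ℝ) * (((i + 1).factorial : ℝ) * A * f y ^ i *
                iteratedDerivWithin (m - i) f (Set.Icc a b) y * f y) := step
            _ = ((i + 1 + 1).factorial : ℝ) * A *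
                (f y ^ (i + 1) * iteratedDerivWithin (m - i) f (Set.Icc a b) y) := by
              rw [hfact]; push_cast; ring
            _ ≤ ((i + 1 + 1).factorial : ℝ) * A *
                (((i + 1 : ℕ) : ℝ) * f y ^ i * iteratedDerivWithin 1 f (Set.Icc a b) y *
                  iteratedDerivWithin (m - (i + 1)) f (Set.Icc a b) y +
                 f y ^ (i + 1) * iteratedDerivWithin (m - i) f (Set.Icc a b) y) := by
              nlinarith [t1]
    -- key2
    have key2 : ∀ x ∈ Set.Icc a b,
        (∫ t in a..x, f t) ^ m * f x ≤
          (m.factorial : ℝ) * A * f x ^ m * iteratedDerivWithin 1 f (Set.Icc a b) x := by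
      rcases Nat.eq_zero_or_pos m with rfl | hm
      · intro x hx
        have := hAf x hx
        simpa using this
      · obtain ⟨i, rfl⟩ : ∃ i, m = i + 1 := ⟨m - 1, by omega⟩
        intro x hx
        have h := key i (by omega) x hx
        rw [show i + 1 - i = 1 from by omega] at h
        calc (∫ t in a..x, f t) ^ (i + 1) * f x
            ≤ ((i + 1).factorial : ℝ) * A * f x ^ i * iteratedDerivWithin 1 f (Set.Icc a b) x
                * f x := mul_le_mul_of_nonneg_right h (hfnn x hx)
          _ = ((i + 1).factorial : ℝ) * A * f x ^ (i + 1) *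
                iteratedDerivWithin 1 f (Set.Icc a b) x := by ring
    -- L1
    have L1 : ∀ x ∈ Set.Icc a b,
        (∫ t in a..x, f t) ^ (m + 1) ≤ (m.factorial : ℝ) * A * f x ^ (m + 1) := by
      intro x hx
      have h := aux_nonneg hab
        (fun y => (m.factorial : ℝ) * A * f y ^ (m + 1) - (∫ t in a..y, f t) ^ (m + 1))
        ((continuousOn_const.mul (hfc.pow (m + 1))).sub (hGcont.pow (m + 1)))
        ?der
        (by
          simp only [hGa, zero_pow (Nat.succ_ne_zero m), sub_zero]
          have := pow_nonneg (hfnn a ha) (m + 1)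
          positivity)
        x hx
      · simp only [sub_nonneg] at h; exact h
      case der =>
        intro y hy
        have hyI : y ∈ Set.Icc a b := Set.Ioo_subset_Icc_self hy
        have h1 : HasDerivAt (fun z => f z ^ (m + 1))
            ((m + 1 : ℕ) * f y ^ (m + 1 - 1) * iteratedDerivWithin 1 f (Set.Icc a b) y) y :=
          (hfderiv y hy).pow (m + 1)
        rw [Nat.add_sub_cancel] at h1
        have h2 : HasDerivAt (fun z => (∫ t in a..z, f t) ^ (m + 1))
            ((m + 1 : ℕ) * (∫ t in a..y, f t) ^ (m + 1 - 1) * f y) y :=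
          (hGderiv y hy).pow (m + 1)
        rw [Nat.add_sub_cancel] at h2
        refine ⟨_, ?_, (h1.const_mul ((m.factorial : ℝ) * A)).sub h2⟩
        have hk2 := key2 y hyI
        have hmc : (0:ℝ) ≤ ((m + 1 : ℕ) : ℝ) := by positivity
        have := mul_le_mul_of_nonneg_left hk2 hmc
        rw [sub_nonneg]
        calc ((m + 1 : ℕ) : ℝ) * (∫ t in a..y, f t) ^ m * f y
            = ((m + 1 : ℕ) : ℝ) * ((∫ t in a..y, f t) ^ m * f y) := by ring
          _ ≤ ((m + 1 : ℕ) : ℝ) * ((m.factorial : ℝ) * A * f y ^ m *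
                iteratedDerivWithin 1 f (Set.Icc a b) y) := this
          _ = (m.factorial : ℝ) * A * (((m + 1 : ℕ) : ℝ) * f y ^ m *
                iteratedDerivWithin 1 f (Set.Icc a b) y) := by ring
    -- N : main pointwise inequality
    have N : ∀ x ∈ Set.Icc a b,
        (∫ t in a..x, f t) ^ (m + 1) * f x ≤
          (m.factorial : ℝ) * A * (f x ^ (m + 2) - f a ^ (m + 2)) := by
      intro x hx
      have h := aux_nonneg hab
        (fun y => (m.factorial : ℝ) * A * (f y ^ (m + 2) - f a ^ (m + 2)) -
          (∫ t in a..y, f t) ^ (m + 1) * f y)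
        ((continuousOn_const.mul ((hfc.pow (m + 2)).sub continuousOn_const)).sub
          ((hGcont.pow (m + 1)).mul hfc))
        ?der
        (by simp [hGa, zero_pow (Nat.succ_ne_zero m)])
        x hx
      · simp only [sub_nonneg] at h; exact h
      case der =>
        intro y hy
        have hyI : y ∈ Set.Icc a b := Set.Ioo_subset_Icc_self hy
        have h1 : HasDerivAt (fun z => f z ^ (m + 2))
            ((m + 2 : ℕ) * f y ^ (m + 2 - 1) * iteratedDerivWithin 1 f (Set.Icc a b) y) y :=
          (hfderiv y hy).pow (m + 2)
        rw [show m + 2 - 1 = m + 1 from by omega] at h1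
        have h2 : HasDerivAt (fun z => (∫ t in a..z, f t) ^ (m + 1))
            ((m + 1 : ℕ) * (∫ t in a..y, f t) ^ (m + 1 - 1) * f y) y :=
          (hGderiv y hy).pow (m + 1)
        rw [Nat.add_sub_cancel] at h2
        have h3 := (h2.mul (hfderiv y hy))
        have h4 := ((h1.sub_const (f a ^ (m + 2))).const_mul ((m.factorial : ℝ) * A))
        refine ⟨_, ?_, h4.sub h3⟩
        have hF := hfnn y hyI
        have hD1 := hDnn 1 (by omega) y hyI
        have hk2 := key2 y hyI
        have hL1 := L1 y hyI
        have e1 : ((m + 1 : ℕ) : ℝ) * (∫ t in a..y, f t) ^ m * f y * f y ≤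
            ((m + 1 : ℕ) : ℝ) * ((m.factorial : ℝ) * A * f y ^ m *
              iteratedDerivWithin 1 f (Set.Icc a b) y * f y) := by
          calc ((m + 1 : ℕ) : ℝ) * (∫ t in a..y, f t) ^ m * f y * f y
              = ((m + 1 : ℕ) : ℝ) * (((∫ t in a..y, f t) ^ m * f y) * f y) := by ring
            _ ≤ ((m + 1 : ℕ) : ℝ) * (((m.factorial : ℝ) * A * f y ^ m *
                  iteratedDerivWithin 1 f (Set.Icc a b) y) * f y) := by
                apply mul_le_mul_of_nonneg_left (mul_le_mul_of_nonneg_right hk2 hF)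
                positivity
            _ = ((m + 1 : ℕ) : ℝ) * ((m.factorial : ℝ) * A * f y ^ m *
                  iteratedDerivWithin 1 f (Set.Icc a b) y * f y) := by ring
        have e2 : (∫ t in a..y, f t) ^ (m + 1) * iteratedDerivWithin 1 f (Set.Icc a b) y ≤
            (m.factorial : ℝ) * A * f y ^ (m + 1) * iteratedDerivWithin 1 f (Set.Icc a b) y :=
          mul_le_mul_of_nonneg_right hL1 hD1
        rw [sub_nonneg]
        calc ((m + 1 : ℕ) : ℝ) * (∫ t in a..y, f t) ^ m * f y * f y +
              (∫ t in a..y, f t) ^ (m + 1) * iteratedDerivWithin 1 f (Set.Icc a b) y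
            ≤ ((m + 1 : ℕ) : ℝ) * ((m.factorial : ℝ) * A * f y ^ m *
                iteratedDerivWithin 1 f (Set.Icc a b) y * f y) +
              (m.factorial : ℝ) * A * f y ^ (m + 1) *
                iteratedDerivWithin 1 f (Set.Icc a b) y := add_le_add e1 e2
          _ = (m.factorial : ℝ) * A * (((m + 2 : ℕ) : ℝ) * f y ^ (m + 1) *
                iteratedDerivWithin 1 f (Set.Icc a b) y) := by push_cast; ring
    -- primitive of f^(m+2)
    have hfnc : ContinuousOn (fun x => f x ^ (m + 2)) (Set.Icc a b) := hfc.pow (m + 2)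
    have hHint : ∀ x ∈ Set.Icc a b,
        IntervalIntegrable (fun t => f t ^ (m + 2)) volume a x := by
      intro x hx
      apply ContinuousOn.intervalIntegrable
      apply hfnc.mono
      rw [Set.uIcc_of_le hx.1]
      exact Set.Icc_subset_Icc le_rfl hx.2
    have hHcont : ContinuousOn (fun y => ∫ t in a..y, f t ^ (m + 2)) (Set.Icc a b) := by
      have h := intervalIntegral.continuousOn_primitive_interval (a := a) (b := b) (μ := volume)
        (f := fun t => f t ^ (m + 2)) (by rw [Set.uIcc_of_le hab.le]; exact hfnc.integrableOn_Icc)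
      rwa [Set.uIcc_of_le hab.le] at h
    have hHderiv : ∀ x ∈ Set.Ioo a b,
        HasDerivAt (fun y => ∫ t in a..y, f t ^ (m + 2)) (f x ^ (m + 2)) x := by
      intro x hx
      have hxI : x ∈ Set.Icc a b := Set.Ioo_subset_Icc_self hx
      exact intervalIntegral.integral_hasDerivAt_right (hHint x hxI)
        (ContinuousOn.stronglyMeasurableAtFilter isOpen_Ioo (hfnc.mono Set.Ioo_subset_Icc_self) x hx)
        ((hfnc x hxI).continuousAt (Icc_mem_nhds hx.1 hx.2))
    -- final function
    set c : ℝ := (((m + 2 : ℕ) : ℝ) - 1) / (((m + 2).factorial : ℝ) * A) with hcdef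
    have hfactpos : (0:ℝ) < (m.factorial : ℝ) * A := by positivity
    have hfacteq : (((m + 2).factorial : ℕ) : ℝ) =
        ((m + 2 : ℕ) : ℝ) * (((m + 1 : ℕ) : ℝ) * (m.factorial : ℝ)) := by
      rw [show m + 2 = (m + 1) + 1 from rfl, Nat.factorial_succ, Nat.factorial_succ]
      push_cast; ring
    have hfin := aux_nonneg hab
      (fun y => (∫ t in a..y, f t ^ (m + 2)) - (y - a) * f a ^ (m + 2) -
        c * (∫ t in a..y, f t) ^ (m + 2))
      (by
        apply ContinuousOn.sub
        apply ContinuousOn.sub hHcont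
        · exact ((continuous_id.sub continuous_const).mul continuous_const).continuousOn
        · exact continuousOn_const.mul (hGcont.pow (m + 2)))
      ?der
      (by simp [hGa, zero_pow (show m + 2 ≠ 0 from by omega)])
      b hb
    case der =>
      intro y hy
      have hyI : y ∈ Set.Icc a b := Set.Ioo_subset_Icc_self hy
      have hq1 := hHderiv y hy
      have hq2 : HasDerivAt (fun z => (z - a) * f a ^ (m + 2)) (1 * f a ^ (m + 2)) y :=
        ((hasDerivAt_id y).sub_const a).mul_const _
      have hq3 : HasDerivAt (fun z => (∫ t in a..z, f t) ^ (m + 2))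
          ((m + 2 : ℕ) * (∫ t in a..y, f t) ^ (m + 2 - 1) * f y) y :=
        (hGderiv y hy).pow (m + 2)
      rw [show m + 2 - 1 = m + 1 from by omega] at hq3
      refine ⟨_, ?_, (hq1.sub hq2).sub (hq3.const_mul c)⟩
      have h6 : (∫ t in a..y, f t) ^ (m + 1) * f y / ((m.factorial : ℝ) * A) ≤
          f y ^ (m + 2) - f a ^ (m + 2) := by
        rw [div_le_iff₀ hfactpos]
        have := N y hyI
        linarith
      have h7 : c * (((m + 2 : ℕ) : ℝ) * (∫ t in a..y, f t) ^ (m + 1) * f y) =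
          (∫ t in a..y, f t) ^ (m + 1) * f y / ((m.factorial : ℝ) * A) := by
        rw [hcdef, hfacteq]
        have h2 : ((m + 2 : ℕ) : ℝ) ≠ 0 := by positivity
        have h1 : ((m + 1 : ℕ) : ℝ) ≠ 0 := by positivity
        have h0 : (m.factorial : ℝ) ≠ 0 := by positivity
        field_simp
        push_cast
        ring
      have h8 := h7
      linarith [h6, h7]
    simp only [sub_nonneg] at hfin
    linarith [hfin]
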